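/- Let q₁, q₂ ∈ ℂ* satisfy q₁²q₂ = 1, q₁ ≠ 1, q₂ ≠ 1 and q₁q₂ ≠ 1. Then for all one-variable Laurent polynomials f, g, h over ℂ and every α ∈ ℂ*, the iterated shuffle product f * g * h ∈ S₃ is defined at the point (α, q₁α, q₁q₂α) (whose coordinates are pairwise distinct) and vanishes there: (f * g * h)(α, q₁α, q₁q₂α) = 0. -/

import Mathlib

open MvPolynomial

noncomputable section ShuffleAlgebra

variable (K : Type) [Field K]

/-- The field of rational functions in countably many variables `z 0, z 1, …` over `K`. -/
abbrev RF := FractionRing (MvPolynomial ℕ K)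

/-- The variable `z i` as a rational function. -/
def Z (i : ℕ) : RF K := algebraMap (MvPolynomial ℕ K) (RF K) (X i)

/-- A constant, viewed as a rational function. -/
def cst (q : K) : RF K := algebraMap (MvPolynomial ℕ K) (RF K) (C q)

/-- Substitution `z i ↦ z (f i)` for an injective `f`, as a ring homomorphism of
rational functions. -/
def ren (f : ℕ → ℕ) (hf : Function.Injective f) : RF K →+* RF K :=
  IsFractionRing.lift (g := (algebraMap (MvPolynomial ℕ K) (RF K)).comp (rename f).toRingHom)
    ((IsFractionRing.injective (MvPolynomial ℕ K) (RF K)).comp (rename_injective f hf))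

/-- A permutation of `Fin k` extended (by the identity) to a permutation of `ℕ`. -/
def natPerm (k : ℕ) (σ : Equiv.Perm (Fin k)) : Equiv.Perm ℕ :=
  σ.extendDomain Fin.equivSubtype

/-- `Alt_{S_k}(F) = (1/k!) ∑_{σ ∈ S_k} sgn(σ) F(z_{σ(1)},…,z_{σ(k)})`. -/
def Alt (k : ℕ) (F : RF K) : RF K :=
  (k.factorial : RF K)⁻¹ *
    ∑ σ : Equiv.Perm (Fin k),
      ((Equiv.Perm.sign σ : ℤ) : RF K) * ren K (natPerm k σ) (natPerm k σ).injective F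

variable (q₁ q₂ : K)

/-- `μ(x,y) = (x − q₁y)(x − q₂y)/(x − y)²`. -/
def mu (x y : RF K) : RF K := (x - cst K q₁ * y) * (x - cst K q₂ * y) / (x - y) ^ 2

/-- The shuffle product of `F` (a function of `z 0, …, z (n-1)`) and `G`
(a function of `z 0, …, z (m-1)`). -/
def shuffle (n m : ℕ) (F G : RF K) : RF K :=
  Alt K (n + m) (F * ren K (· + n) (add_left_injective n) G *
    ∏ i : Fin n, ∏ j : Fin m, mu K q₁ q₂ (Z K i.val) (Z K (n + j.val)))

/-- The Vandermonde determinant `Δ_n = ∏_{i<j} (z i − z j)`. -/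
def vand (n : ℕ) : RF K :=
  algebraMap (MvPolynomial ℕ K) (RF K)
    (∏ j ∈ Finset.range n, ∏ i ∈ Finset.range j, (X i - X j))

/-- `f` is a symmetric Laurent polynomial in the variables `z 0, …, z (n-1)`. -/
def IsSymLaurent (n : ℕ) (f : RF K) : Prop :=
  (∃ (p : MvPolynomial ℕ K) (N : ℕ), (↑p.vars : Set ℕ) ⊆ Set.Iio n ∧
      f * algebraMap (MvPolynomial ℕ K) (RF K) ((∏ i ∈ Finset.range n, X i) ^ N)
        = algebraMap (MvPolynomial ℕ K) (RF K) p) ∧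
  ∀ σ : Equiv.Perm (Fin n), ren K (natPerm n σ) (natPerm n σ).injective f = f

/-- The `n`-th graded component `S_n` of the shuffle algebra: quotients `f/Δ_n` with
`f` a symmetric Laurent polynomial in `z 0, …, z (n-1)`. -/
def Sgr (n : ℕ) : Set (RF K) :=
  {F | ∃ f : RF K, IsSymLaurent K n f ∧ F = f / vand K n}

/-- Iterated (left-to-right) shuffle product of a list of elements of `S₁`. -/
def iterSh (l : List (RF K)) : RF K :=
  (l.foldl (fun acc f => (shuffle K q₁ q₂ acc.2 1 acc.1 f, acc.2 + 1)) ((1 : RF K), 0)).1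

/-- The iterated shuffle product `z^{i₁} * ⋯ * z^{i_n}`. -/
def zpows (l : List ℤ) : RF K := iterSh K q₁ q₂ (l.map fun i => Z K 0 ^ i)

/-- `F` is defined at the point `α` and its value there is `v`. -/
def EvalAt (α : ℕ → K) (F : RF K) (v : K) : Prop :=
  ∃ p q : MvPolynomial ℕ K, eval α q ≠ 0 ∧
    F * algebraMap (MvPolynomial ℕ K) (RF K) q = algebraMap (MvPolynomial ℕ K) (RF K) p ∧
    eval α p = v * eval α q

end ShuffleAlgebra


noncomputable section Proof
open Equiv MvPolynomial

variable {a : ℕ → ℂ} {F G : RF ℂ} {v w : ℂ}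

lemma evalAt_algebraMap (a : ℕ → ℂ) (p : MvPolynomial ℕ ℂ) :
    EvalAt ℂ a (algebraMap (MvPolynomial ℕ ℂ) (RF ℂ) p) (eval a p) :=
  ⟨p, 1, by simp, by simp, by simp⟩

lemma evalAt_zero (a : ℕ → ℂ) : EvalAt ℂ a 0 0 := by simpa using evalAt_algebraMap a 0

lemma evalAt_one (a : ℕ → ℂ) : EvalAt ℂ a 1 1 := by simpa using evalAt_algebraMap a 1

lemma evalAt_natCast (a : ℕ → ℂ) (n : ℕ) : EvalAt ℂ a (n : RF ℂ) (n : ℂ) := by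
  simpa using evalAt_algebraMap a (n : MvPolynomial ℕ ℂ)

lemma evalAt_intCast (a : ℕ → ℂ) (n : ℤ) : EvalAt ℂ a (n : RF ℂ) (n : ℂ) := by
  simpa using evalAt_algebraMap a (n : MvPolynomial ℕ ℂ)

lemma evalAt_Z (a : ℕ → ℂ) (i : ℕ) : EvalAt ℂ a (Z ℂ i) (a i) := by
  simpa [Z] using evalAt_algebraMap a (X i)

lemma evalAt_cst (a : ℕ → ℂ) (c : ℂ) : EvalAt ℂ a (cst ℂ c) c := by
  simpa [cst] using evalAt_algebraMap a (C c)

lemma EvalAt.mul (hF : EvalAt ℂ a F v) (hG : EvalAt ℂ a G w) : EvalAt ℂ a (F * G) (v * w) := by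
  obtain ⟨p, q, hq, hFq, hp⟩ := hF
  obtain ⟨p', q', hq', hGq, hp'⟩ := hG
  refine ⟨p * p', q * q', by simp [hq, hq'], ?_, ?_⟩
  · rw [map_mul, map_mul, mul_mul_mul_comm, hFq, hGq]
  · simp only [map_mul, hp, hp']; ring

lemma EvalAt.add (hF : EvalAt ℂ a F v) (hG : EvalAt ℂ a G w) : EvalAt ℂ a (F + G) (v + w) := by
  obtain ⟨p, q, hq, hFq, hp⟩ := hF
  obtain ⟨p', q', hq', hGq, hp'⟩ := hG
  refine ⟨p * q' + p' * q, q * q', by simp [hq, hq'], ?_, ?_⟩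
  · simp only [RingHom.map_mul, RingHom.map_add]
    linear_combination (algebraMap (MvPolynomial ℕ ℂ) (RF ℂ) q') * hFq +
      (algebraMap (MvPolynomial ℕ ℂ) (RF ℂ) q) * hGq
  · simp only [RingHom.map_mul, RingHom.map_add, hp, hp']; ring

lemma EvalAt.neg (hF : EvalAt ℂ a F v) : EvalAt ℂ a (-F) (-v) := by
  obtain ⟨p, q, hq, hFq, hp⟩ := hF
  exact ⟨-p, q, hq, by rw [neg_mul, hFq, RingHom.map_neg], by simp [hp]⟩

lemma EvalAt.sub (hF : EvalAt ℂ a F v) (hG : EvalAt ℂ a G w) : EvalAt ℂ a (F - G) (v - w) := by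
  simpa [sub_eq_add_neg] using hF.add hG.neg

lemma EvalAt.inv (hF : EvalAt ℂ a F v) (hv : v ≠ 0) : EvalAt ℂ a F⁻¹ v⁻¹ := by
  obtain ⟨p, q, hq, hFq, hp⟩ := hF
  have hpe : eval a p ≠ 0 := by rw [hp]; exact mul_ne_zero hv hq
  have hF0 : F ≠ 0 := by
    rintro rfl
    rw [zero_mul] at hFq
    have h0 : (0 : MvPolynomial ℕ ℂ) = p :=
      IsFractionRing.injective (MvPolynomial ℕ ℂ) (RF ℂ) (by simpa using hFq)
    exact hpe (by rw [← h0]; simp)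
  refine ⟨q, p, hpe, ?_, ?_⟩
  · rw [← hFq, ← mul_assoc, inv_mul_cancel₀ hF0, one_mul]
  · rw [hp]; field_simp

lemma EvalAt.div (hF : EvalAt ℂ a F v) (hG : EvalAt ℂ a G w) (hw : w ≠ 0) :
    EvalAt ℂ a (F / G) (v / w) := by
  simpa [div_eq_mul_inv] using hF.mul (hG.inv hw)

lemma evalAt_sum {ι : Type*} (s : Finset ι) (F : ι → RF ℂ) (v : ι → ℂ)
    (h : ∀ i ∈ s, EvalAt ℂ a (F i) (v i)) :
    EvalAt ℂ a (∑ i ∈ s, F i) (∑ i ∈ s, v i) := by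
  classical
  induction s using Finset.induction with
  | empty => simpa using evalAt_zero a
  | insert _ _ hx ih =>
      rename_i x s
      rw [Finset.sum_insert hx, Finset.sum_insert hx]
      exact (h x (by simp)).add (ih fun i hi => h i (by simp [hi]))

lemma evalAt_prod {ι : Type*} (s : Finset ι) (F : ι → RF ℂ) (v : ι → ℂ)
    (h : ∀ i ∈ s, EvalAt ℂ a (F i) (v i)) :
    EvalAt ℂ a (∏ i ∈ s, F i) (∏ i ∈ s, v i) := by
  classical
  induction s using Finset.induction with
  | empty => simpa using evalAt_one a
  | insert _ _ hx ih =>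
      rename_i x s
      rw [Finset.prod_insert hx, Finset.prod_insert hx]
      exact (h x (by simp)).mul (ih fun i hi => h i (by simp [hi]))

lemma ren_algebraMap (g : ℕ → ℕ) (hg : Function.Injective g) (p : MvPolynomial ℕ ℂ) :
    ren ℂ g hg (algebraMap (MvPolynomial ℕ ℂ) (RF ℂ) p)
      = algebraMap (MvPolynomial ℕ ℂ) (RF ℂ) (rename g p) :=
  IsFractionRing.lift_algebraMap _ _

lemma evalAt_ren {g : ℕ → ℕ} {hg : Function.Injective g}
    (h : EvalAt ℂ (a ∘ g) F v) : EvalAt ℂ a (ren ℂ g hg F) v := by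
  obtain ⟨p, q, hq, hFq, hp⟩ := h
  refine ⟨rename g p, rename g q, ?_, ?_, ?_⟩
  · rwa [eval_rename]
  · have := congrArg (ren ℂ g hg) hFq
    rwa [RingHom.map_mul, ren_algebraMap, ren_algebraMap] at this
  · rw [eval_rename, eval_rename]; exact hp

lemma evalAt_Alt (a : ℕ → ℂ) (k : ℕ) (F : RF ℂ) (v : Perm (Fin k) → ℂ)
    (hv : ∀ σ : Perm (Fin k), EvalAt ℂ (a ∘ (natPerm k σ : Perm ℕ)) F (v σ)) :
    EvalAt ℂ a (Alt ℂ k F)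
      ((k.factorial : ℂ)⁻¹ * ∑ σ : Perm (Fin k), ((Perm.sign σ : ℤ) : ℂ) * v σ) := by
  refine EvalAt.mul ?_ ?_
  · exact (evalAt_natCast a k.factorial).inv (by exact_mod_cast k.factorial_ne_zero)
  · exact evalAt_sum _ _ _ fun σ _ => (evalAt_intCast a (Perm.sign σ : ℤ)).mul (evalAt_ren (hv σ))

lemma evalAt_mu (q₁ q₂ : ℂ) (a : ℕ → ℂ) (x y : ℕ) (hxy : a x ≠ a y) :
    EvalAt ℂ a (mu ℂ q₁ q₂ (Z ℂ x) (Z ℂ y))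
      ((a x - q₁ * a y) * (a x - q₂ * a y) / (a x - a y) ^ 2) := by
  have hZ := evalAt_Z a x
  have hZy := evalAt_Z a y
  refine EvalAt.div ?_ ?_ (pow_ne_zero 2 (sub_ne_zero_of_ne hxy))
  · exact ((hZ.sub ((evalAt_cst a q₁).mul hZy)).mul (hZ.sub ((evalAt_cst a q₂).mul hZy)))
  · simpa [pow_two] using (hZ.sub hZy).mul (hZ.sub hZy)

lemma natPerm_apply_lt (k : ℕ) (σ : Perm (Fin k)) (i : ℕ) (h : i < k) :
    (natPerm k σ : Perm ℕ) i = (σ ⟨i, h⟩ : Fin k).val := by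
  rw [natPerm, Perm.extendDomain_apply_subtype _ Fin.equivSubtype h]
  simp [Fin.equivSubtype]

lemma evalAt_sym1 {F : RF ℂ} (hF : IsSymLaurent ℂ 1 F) (a : ℕ → ℂ) (ha : a 0 ≠ 0) :
    ∃ v, EvalAt ℂ a F v := by
  obtain ⟨⟨p, N, -, hp⟩, -⟩ := hF
  rw [Finset.prod_range_one] at hp
  refine ⟨eval a p / (a 0) ^ N, p, (X 0) ^ N, ?_, hp, ?_⟩
  · simpa using pow_ne_zero N ha
  · have h2 : eval a ((X 0 : MvPolynomial ℕ ℂ) ^ N) = (a 0) ^ N := by simp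
    rw [h2]
    field_simp

lemma natPerm_fin_one (σ : Equiv.Perm (Fin 1)) : (natPerm 1 σ : Perm ℕ) = 1 := by
  have hσ : σ = 1 := by ext x; exact congrArg Fin.val (Subsingleton.elim _ _)
  rw [hσ, natPerm, Perm.extendDomain_one]

lemma exists_eval_sh1 {f : RF ℂ} (hf : IsSymLaurent ℂ 1 f) (q₁ q₂ : ℂ) (c : ℕ → ℂ)
    (hc : c 0 ≠ 0) : ∃ v, EvalAt ℂ c (shuffle ℂ q₁ q₂ 0 1 1 f) v := by
  obtain ⟨vf, hvf⟩ := evalAt_sym1 hf c hc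
  refine ⟨_, evalAt_Alt c 1 _ (fun _ => 1 * vf * 1) (fun σ => ?_)⟩
  have hpt : c ∘ ((natPerm 1 σ : Perm ℕ) : ℕ → ℕ) = c := by
    rw [natPerm_fin_one]; ext x; simp
  rw [hpt]
  refine ((evalAt_one c).mul (evalAt_ren ?_)).mul ?_
  · exact hvf
  · simp only [Finset.univ_eq_empty, Finset.prod_empty]
    exact evalAt_one c

lemma exists_eval_sh2 {f g : RF ℂ} (hf : IsSymLaurent ℂ 1 f) (hg : IsSymLaurent ℂ 1 g)
    (q₁ q₂ : ℂ) (b : ℕ → ℂ) (hb0 : b 0 ≠ 0) (hb1 : b 1 ≠ 0) (hbne : b 0 ≠ b 1) :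
    ∃ v, EvalAt ℂ b (shuffle ℂ q₁ q₂ 1 1 (shuffle ℂ q₁ q₂ 0 1 1 f) g) v := by
  have key : ∀ τ : Perm (Fin 2), ∃ v, EvalAt ℂ (b ∘ ((natPerm 2 τ : Perm ℕ) : ℕ → ℕ))
      ((shuffle ℂ q₁ q₂ 0 1 1 f) * ren ℂ (· + 1) (add_left_injective 1) g *
        ∏ i : Fin 1, ∏ j : Fin 1, mu ℂ q₁ q₂ (Z ℂ i.val) (Z ℂ (1 + j.val))) v := by
    intro τ
    set c := b ∘ ((natPerm 2 τ : Perm ℕ) : ℕ → ℕ) with hcdef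
    have hcm : ∀ (m : ℕ) (hm : m < 2), c m = b ((τ ⟨m, hm⟩ : Fin 2).val) := by
      intro m hm
      rw [hcdef]
      simp only [Function.comp_apply, natPerm_apply_lt 2 τ m hm]
    have hblt : ∀ i : Fin 2, b i.val ≠ 0 := by
      intro i; fin_cases i
      · exact hb0
      · exact hb1
    have hc0 : c 0 ≠ 0 := by rw [hcm 0 (by norm_num)]; exact hblt _
    have hc1 : c 1 ≠ 0 := by rw [hcm 1 (by norm_num)]; exact hblt _
    have hcc : c 0 ≠ c 1 := by
      rw [hcm 0 (by norm_num), hcm 1 (by norm_num)]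
      have hne : τ ⟨0, by norm_num⟩ ≠ τ ⟨1, by norm_num⟩ :=
        τ.injective.ne (by decide)
      have hv0 : (τ ⟨0, by norm_num⟩ : Fin 2).val ≠ (τ ⟨1, by norm_num⟩ : Fin 2).val :=
        fun hcon => hne (Fin.val_injective hcon)
      rcases (by omega : (τ ⟨0, by norm_num⟩ : Fin 2).val = 0 ∨ (τ ⟨0, by norm_num⟩ : Fin 2).val = 1) with h0 | h0 <;>
        rcases (by omega : (τ ⟨1, by norm_num⟩ : Fin 2).val = 0 ∨ (τ ⟨1, by norm_num⟩ : Fin 2).val = 1) with h1 | h1 <;>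
          rw [h0, h1] <;> first
            | (exact absurd (h0.trans h1.symm) hv0)
            | exact hbne
            | exact hbne.symm
    obtain ⟨v1, hv1⟩ := exists_eval_sh1 hf q₁ q₂ c hc0
    obtain ⟨vg, hvg⟩ := evalAt_sym1 hg (c ∘ (· + 1)) hc1
    have hmu : EvalAt ℂ c (∏ i : Fin 1, ∏ j : Fin 1, mu ℂ q₁ q₂ (Z ℂ i.val) (Z ℂ (1 + j.val)))
        ((c 0 - q₁ * c 1) * (c 0 - q₂ * c 1) / (c 0 - c 1) ^ 2) := by
      simp only [Fin.prod_univ_one, Fin.val_zero, Nat.add_zero]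
      exact evalAt_mu q₁ q₂ c 0 1 hcc
    exact ⟨_, (hv1.mul (evalAt_ren hvg)).mul hmu⟩
  choose v hv using key
  exact ⟨_, evalAt_Alt b 2 _ v hv⟩

end Proof

/-- if `q₁² q₂ = 1` with `q₁, q₂ ∈ ℂ*`, `q₁ ≠ 1`, `q₂ ≠ 1`, `q₁q₂ ≠ 1`,
then every iterated shuffle product `f * g * h` of one-variable Laurent polynomials is
defined at the point `(α, q₁α, q₁q₂α)` (whose coordinates are pairwise distinct) and
vanishes there. -/
theorem iterSh_vanishes_nongeneric (q₁ q₂ : ℂ) (hq₁ : q₁ ≠ 0) (hq₂ : q₂ ≠ 0)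
    (hrel : q₁ ^ 2 * q₂ = 1) (h1 : q₁ ≠ 1) (h2 : q₂ ≠ 1) (h3 : q₁ * q₂ ≠ 1)
    (f g h : RF ℂ) (hf : IsSymLaurent ℂ 1 f) (hg : IsSymLaurent ℂ 1 g)
    (hh : IsSymLaurent ℂ 1 h) (α : ℂ) (hα : α ≠ 0) :
    (α ≠ q₁ * α ∧ α ≠ q₁ * q₂ * α ∧ q₁ * α ≠ q₁ * q₂ * α) ∧
    EvalAt ℂ
      (fun k => if k = 0 then α else if k = 1 then q₁ * α else if k = 2 then q₁ * q₂ * α else 0)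
      (iterSh ℂ q₁ q₂ [f, g, h]) 0 := by
  set pt : ℕ → ℂ :=
    (fun k => if k = 0 then α else if k = 1 then q₁ * α else if k = 2 then q₁ * q₂ * α else 0)
    with hptdef
  have p0 : pt 0 = α := rfl
  have p1 : pt 1 = q₁ * α := rfl
  have p2 : pt 2 = q₁ * q₂ * α := rfl
  have d01 : α ≠ q₁ * α := fun hcon =>
    h1 (mul_right_cancel₀ hα (by rw [one_mul]; exact hcon.symm))
  have d02 : α ≠ q₁ * q₂ * α := fun hcon =>
    h3 (mul_right_cancel₀ hα (by rw [one_mul]; exact hcon.symm))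
  have d12 : q₁ * α ≠ q₁ * q₂ * α := by
    intro hcon
    have hq : q₁ * 1 = q₁ * q₂ := by rw [mul_one]; exact mul_right_cancel₀ hα hcon
    exact h2 (mul_left_cancel₀ hq₁ hq).symm
  refine ⟨⟨d01, d02, d12⟩, ?_⟩
  have ptne : ∀ i : Fin 3, pt i.val ≠ 0 := by
    intro i
    fin_cases i
    · exact hα
    · exact mul_ne_zero hq₁ hα
    · exact mul_ne_zero (mul_ne_zero hq₁ hq₂) hα
  have ptinj : ∀ i j : Fin 3, i ≠ j → pt i.val ≠ pt j.val := by
    have d10 := d01.symm; have d20 := d02.symm; have d21 := d12.symm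
    have d10 := d01; have _ := d02
    intro i j hij
    fin_cases i <;> fin_cases j <;>
      first
        | exact absurd rfl hij
        | exact d01 | exact d02 | exact d12
        | exact d01.symm | exact d02.symm | exact d12.symm
  -- the numerator-vanishing helper
  have hz : ∀ u w : ℂ, (u - q₁ * w) * (u - q₂ * w) = 0 →
      (u - q₁ * w) * (u - q₂ * w) / (u - w) ^ 2 = 0 := fun u w hw => by rw [hw, zero_div]
  have keyzero : ∀ i j k : Fin 3, i ≠ j → i ≠ k → j ≠ k →
      (pt i.val - q₁ * pt k.val) * (pt i.val - q₂ * pt k.val) / (pt i.val - pt k.val) ^ 2 *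
      ((pt j.val - q₁ * pt k.val) * (pt j.val - q₂ * pt k.val) / (pt j.val - pt k.val) ^ 2)
        = 0 := by
    have hz10 : (q₁ * α - q₁ * α) * (q₁ * α - q₂ * α) / (q₁ * α - α) ^ 2 = 0 :=
      hz _ _ (mul_eq_zero_of_left (by ring) _)
    have hz21 : (q₁ * q₂ * α - q₁ * (q₁ * α)) * (q₁ * q₂ * α - q₂ * (q₁ * α)) /
        (q₁ * q₂ * α - q₁ * α) ^ 2 = 0 :=
      hz _ _ (mul_eq_zero_of_right _ (by ring))
    have hz02 : (α - q₁ * (q₁ * q₂ * α)) * (α - q₂ * (q₁ * q₂ * α)) /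
        (α - q₁ * q₂ * α) ^ 2 = 0 :=
      hz _ _ (mul_eq_zero_of_left (by linear_combination (-α : ℂ) * hrel) _)
    intro i j k hij hik hjk
    fin_cases i <;> fin_cases j <;> fin_cases k <;>
      first
        | exact absurd rfl hij
        | exact absurd rfl hik
        | exact absurd rfl hjk
        | exact mul_eq_zero_of_left hz10 _
        | exact mul_eq_zero_of_right _ hz10
        | exact mul_eq_zero_of_left hz21 _
        | exact mul_eq_zero_of_right _ hz21
        | exact mul_eq_zero_of_left hz02 _
        | exact mul_eq_zero_of_right _ hz02
  have main : ∀ σ : Equiv.Perm (Fin 3),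
      EvalAt ℂ (pt ∘ ((natPerm 3 σ : Equiv.Perm ℕ) : ℕ → ℕ))
        ((shuffle ℂ q₁ q₂ 1 1 (shuffle ℂ q₁ q₂ 0 1 1 f) g) *
          ren ℂ (· + 2) (add_left_injective 2) h *
          ∏ i : Fin 2, ∏ j : Fin 1, mu ℂ q₁ q₂ (Z ℂ i.val) (Z ℂ (2 + j.val))) 0 := by
    intro σ
    set b := pt ∘ ((natPerm 3 σ : Equiv.Perm ℕ) : ℕ → ℕ) with hbdef
    have hbm : ∀ (m : ℕ) (hm : m < 3), b m = pt ((σ ⟨m, hm⟩ : Fin 3).val) := by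
      intro m hm
      rw [hbdef]
      simp only [Function.comp_apply, natPerm_apply_lt 3 σ m hm]
    have hb0 : b 0 ≠ 0 := by rw [hbm 0 (by norm_num)]; exact ptne _
    have hb1 : b 1 ≠ 0 := by rw [hbm 1 (by norm_num)]; exact ptne _
    have hb2 : b 2 ≠ 0 := by rw [hbm 2 (by norm_num)]; exact ptne _
    have hbne : ∀ (x y : ℕ) (hx : x < 3) (hy : y < 3), x ≠ y → b x ≠ b y := by
      intro x y hx hy hxy
      rw [hbm x hx, hbm y hy]
      exact ptinj _ _ (σ.injective.ne fun hcon => hxy (congrArg Fin.val hcon))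
    obtain ⟨v2, hv2⟩ := exists_eval_sh2 hf hg q₁ q₂ b hb0 hb1
      (hbne 0 1 (by norm_num) (by norm_num) (by norm_num))
    obtain ⟨vh, hvh⟩ := evalAt_sym1 hh (b ∘ (· + 2)) hb2
    have hmu : EvalAt ℂ b
        (∏ i : Fin 2, ∏ j : Fin 1, mu ℂ q₁ q₂ (Z ℂ i.val) (Z ℂ (2 + j.val))) 0 := by
      have e := (evalAt_mu q₁ q₂ b 0 2
          (hbne 0 2 (by norm_num) (by norm_num) (by norm_num))).mul
        (evalAt_mu q₁ q₂ b 1 2 (hbne 1 2 (by norm_num) (by norm_num) (by norm_num)))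
      have hM : (b 0 - q₁ * b 2) * (b 0 - q₂ * b 2) / (b 0 - b 2) ^ 2 *
          ((b 1 - q₁ * b 2) * (b 1 - q₂ * b 2) / (b 1 - b 2) ^ 2) = 0 := by
        rw [hbm 0 (by norm_num), hbm 1 (by norm_num), hbm 2 (by norm_num)]
        exact keyzero _ _ _ (σ.injective.ne (by decide)) (σ.injective.ne (by decide))
          (σ.injective.ne (by decide))
      rw [hM] at e
      simpa only [Fin.prod_univ_two, Fin.prod_univ_one, Fin.val_zero, Fin.val_one,
        Nat.add_zero] using e
    have e2 := (hv2.mul (evalAt_ren (g := (· + 2)) (hg := add_left_injective 2) hvh)).mul hmu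
    have hv0 : v2 * vh * 0 = 0 := mul_zero _
    exact hv0 ▸ e2
  have final := evalAt_Alt pt 3 _ (fun _ => 0) main
  simp only [mul_zero, Finset.sum_const_zero] at final
  exact final
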